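/- (Upper bound on Q^{ρ†} − Q_K for Peng's Q(λ) with a fixed behavior policy.) Fix λ ∈ [0,1] and a policy μ, and suppose π† is a policy such that Q^{λμ+(1−λ)π†} ≥ Q^{λμ+(1−λ)π} pointwise for every policy π; write ρ† := λμ + (1−λ)π†. Let Q_0 : X → A → ℝ be arbitrary, let ε_k : X → A → ℝ be arbitrary, and define Q_{k+1} := N_λ^{μ,π_k} Q_k + ε_k, where π_k is any policy greedy with respect to Q_k. Define the linear operator A† := γ(1−λ)·(I − γλP^μ)⁻¹ ∘ P^{π†} on functions X → A → ℝ, and set d_k := Q^{ρ†} − Q_k. Then for every K ≥ 0, d_K + ∑_{k=0}^{K−1} (A†)^{K−k−1} ε_k ≤ (A†)^K d_0 pointwise. -/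

import Mathlib

open scoped BigOperators

namespace RLPQL

variable {X A : Type*} [Fintype X] [Fintype A]

/-- `P` is a transition kernel: nonnegative and rows sum to one. -/
def IsKernel (P : X → A → X → ℝ) : Prop :=
  (∀ x a y, 0 ≤ P x a y) ∧ ∀ x a, ∑ y, P x a y = 1

/-- `π` is a (Markov) policy: nonnegative and sums to one over actions. -/
def IsPolicy (π : X → A → ℝ) : Prop :=
  (∀ x a, 0 ≤ π x a) ∧ ∀ x, ∑ a, π x a = 1

/-- `(πQ)(x) = ∑_a π x a * Q x a`. -/
def polQ (π Q : X → A → ℝ) : X → ℝ := fun x => ∑ a, π x a * Q x a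

/-- `(PV)(x,a) = ∑_y P x a y * V y`. -/
def PV (P : X → A → X → ℝ) (V : X → ℝ) : X → A → ℝ := fun x a => ∑ y, P x a y * V y

/-- `P^π Q = P (π Q)`. -/
def Ppol (P : X → A → X → ℝ) (π Q : X → A → ℝ) : X → A → ℝ := PV P (polQ π Q)

/-- Bellman operator `T^π Q = r + γ P^π Q`. -/
def bellman (P : X → A → X → ℝ) (r : X → A → ℝ) (γ : ℝ) (π Q : X → A → ℝ) : X → A → ℝ :=
  fun x a => r x a + γ * Ppol P π Q x a

/-- Bellman optimality operator `(T Q)(x,a) = r x a + γ ∑_y P x a y * max_b Q y b`. -/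
noncomputable def optBellman (P : X → A → X → ℝ) (r : X → A → ℝ) (γ : ℝ) (Q : X → A → ℝ) :
    X → A → ℝ :=
  fun x a => r x a + γ * ∑ y, P x a y * (⨆ b, Q y b)

/-- `π` is greedy with respect to `Q`. -/
def IsGreedy (π Q : X → A → ℝ) : Prop := ∀ x, polQ π Q x = ⨆ a, Q x a

/-- `(I - c P^μ)⁻¹ f = ∑_{t=0}^∞ c^t (P^μ)^t f`. -/
noncomputable def resolvent (P : X → A → X → ℝ) (c : ℝ) (μ : X → A → ℝ) (f : X → A → ℝ) :
    X → A → ℝ :=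
  fun x a => ∑' t : ℕ, c ^ t * ((Ppol P μ)^[t] f) x a

/-- Peng's Q(λ) operator `N_λ^{μ,π} Q = (I - γλ P^μ)⁻¹ (r + γ(1-λ) P^π Q)`. -/
noncomputable def peng (P : X → A → X → ℝ) (r : X → A → ℝ) (γ lam : ℝ) (μ π Q : X → A → ℝ) :
    X → A → ℝ :=
  resolvent P (γ * lam) μ (fun x a => r x a + γ * (1 - lam) * Ppol P π Q x a)

/-- The mixture policy `c·μ + (1-c)·π`. -/
def mixP (c : ℝ) (μ π : X → A → ℝ) : X → A → ℝ := fun x a => c * μ x a + (1 - c) * π x a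

end RLPQL

open RLPQL

namespace RLPQL
variable {X A : Type*} [Fintype X] [Fintype A]

/-- The linear operator `A† := γ(1-λ)·(I - γλP^μ)⁻¹ ∘ P^{π†}`. -/
noncomputable def Adag (P : X → A → X → ℝ) (γ lam : ℝ) (μ πd : X → A → ℝ)
    (f : X → A → ℝ) : X → A → ℝ :=
  fun x a => γ * (1 - lam) * resolvent P (γ * lam) μ (Ppol P πd f) x a

end RLPQL
namespace RLPQL
set_option linter.unusedSectionVars false
section Helpers
variable {X A : Type*} [Fintype X] [Fintype A]
variable {P : X → A → X → ℝ} {c : ℝ} {μ : X → A → ℝ}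

lemma polQ_abs_le {π : X → A → ℝ} (hπ : IsPolicy π) {f : X → A → ℝ} {M : ℝ}
    (hM : ∀ x a, |f x a| ≤ M) (x : X) : |polQ π f x| ≤ M := by
  unfold polQ
  calc |∑ a, π x a * f x a| ≤ ∑ a, |π x a * f x a| := Finset.abs_sum_le_sum_abs _ _
    _ ≤ ∑ a : A, π x a * M := by
        refine Finset.sum_le_sum fun a _ => ?_
        rw [abs_mul, abs_of_nonneg (hπ.1 x a)]
        exact mul_le_mul_of_nonneg_left (hM x a) (hπ.1 x a)
    _ = M := by rw [← Finset.sum_mul, hπ.2 x, one_mul]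

lemma Ppol_abs_le (hP : IsKernel P) {π : X → A → ℝ} (hπ : IsPolicy π) {f : X → A → ℝ} {M : ℝ}
    (hM : ∀ x a, |f x a| ≤ M) (x : X) (a : A) : |Ppol P π f x a| ≤ M := by
  unfold Ppol PV
  calc |∑ y, P x a y * polQ π f y| ≤ ∑ y, |P x a y * polQ π f y| := Finset.abs_sum_le_sum_abs _ _
    _ ≤ ∑ y : X, P x a y * M := by
        refine Finset.sum_le_sum fun y _ => ?_
        rw [abs_mul, abs_of_nonneg (hP.1 x a y)]
        exact mul_le_mul_of_nonneg_left (polQ_abs_le hπ hM y) (hP.1 x a y)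
    _ = M := by rw [← Finset.sum_mul, hP.2 x a, one_mul]

lemma iter_abs_le (hP : IsKernel P) (hμ : IsPolicy μ) {f : X → A → ℝ} {M : ℝ}
    (hM : ∀ x a, |f x a| ≤ M) : ∀ t x a, |((Ppol P μ)^[t] f) x a| ≤ M := by
  intro t
  induction t with
  | zero => simpa using hM
  | succ n ih =>
      intro x a
      rw [Function.iterate_succ_apply']
      exact Ppol_abs_le hP hμ ih x a

noncomputable def bnd (f : X → A → ℝ) : ℝ := ⨆ p : X × A, |f p.1 p.2|

lemma abs_le_bnd [Nonempty X] [Nonempty A] (f : X → A → ℝ) (x : X) (a : A) : |f x a| ≤ bnd f :=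
  le_ciSup (f := fun p : X × A => |f p.1 p.2|)
    (Set.Finite.bddAbove (Set.finite_range _)) ((x, a) : X × A)

variable [Nonempty X] [Nonempty A]

lemma summable_norm_res (hP : IsKernel P) (hμ : IsPolicy μ) (hc0 : 0 ≤ c) (hc1 : c < 1)
    (f : X → A → ℝ) (x : X) (a : A) :
    Summable (fun t : ℕ => ‖c ^ t * ((Ppol P μ)^[t] f) x a‖) := by
  refine Summable.of_nonneg_of_le (fun t => norm_nonneg _) (fun t => ?_)
    ((summable_geometric_of_lt_one hc0 hc1).mul_right (bnd f))
  rw [Real.norm_eq_abs, abs_mul, abs_pow, abs_of_nonneg hc0]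
  exact mul_le_mul_of_nonneg_left (iter_abs_le hP hμ (abs_le_bnd f) t x a) (pow_nonneg hc0 t)

lemma summable_res (hP : IsKernel P) (hμ : IsPolicy μ) (hc0 : 0 ≤ c) (hc1 : c < 1)
    (f : X → A → ℝ) (x : X) (a : A) :
    Summable (fun t : ℕ => c ^ t * ((Ppol P μ)^[t] f) x a) :=
  (summable_norm_res hP hμ hc0 hc1 f x a).of_norm

lemma Ppol_add (π f g : X → A → ℝ) : Ppol P π (f + g) = Ppol P π f + Ppol P π g := by
  funext x a
  show ∑ y, P x a y * (∑ b, π y b * (f y b + g y b)) =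
    (∑ y, P x a y * ∑ b, π y b * f y b) + ∑ y, P x a y * ∑ b, π y b * g y b
  rw [← Finset.sum_add_distrib]
  refine Finset.sum_congr rfl fun y _ => ?_
  rw [← mul_add, ← Finset.sum_add_distrib]
  congr 1
  exact Finset.sum_congr rfl fun b _ => by ring

lemma Ppol_smul (π : X → A → ℝ) (t : ℝ) (f : X → A → ℝ) :
    Ppol P π (fun x a => t * f x a) = fun x a => t * Ppol P π f x a := by
  funext x a
  show ∑ y, P x a y * (∑ b, π y b * (t * f y b)) = t * ∑ y, P x a y * ∑ b, π y b * f y b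
  rw [Finset.mul_sum]
  refine Finset.sum_congr rfl fun y _ => ?_
  rw [Finset.mul_sum, Finset.mul_sum, Finset.mul_sum]
  exact Finset.sum_congr rfl fun b _ => by ring

lemma Ppol_sub (π f g : X → A → ℝ) : Ppol P π (f - g) = Ppol P π f - Ppol P π g := by
  have h := Ppol_add (P := P) π (f - g) g
  rw [sub_add_cancel] at h
  exact eq_sub_iff_add_eq.mpr h.symm

lemma Ppol_mono (hP : IsKernel P) {π : X → A → ℝ} (hπ : IsPolicy π) {f g : X → A → ℝ}
    (h : ∀ x a, f x a ≤ g x a) : ∀ x a, Ppol P π f x a ≤ Ppol P π g x a := by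
  intro x a
  refine Finset.sum_le_sum fun y _ => mul_le_mul_of_nonneg_left ?_ (hP.1 x a y)
  exact Finset.sum_le_sum fun b _ => mul_le_mul_of_nonneg_left (h y b) (hπ.1 y b)

lemma iter_add (t : ℕ) (f g : X → A → ℝ) :
    (Ppol P μ)^[t] (f + g) = (Ppol P μ)^[t] f + (Ppol P μ)^[t] g := by
  induction t with
  | zero => rfl
  | succ n ih => rw [Function.iterate_succ_apply', Function.iterate_succ_apply',
      Function.iterate_succ_apply', ih, Ppol_add]

lemma iter_smul (t : ℕ) (s : ℝ) (f : X → A → ℝ) :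
    (Ppol P μ)^[t] (fun x a => s * f x a) = fun x a => s * ((Ppol P μ)^[t] f) x a := by
  induction t with
  | zero => rfl
  | succ n ih => rw [Function.iterate_succ_apply', ih, Ppol_smul, Function.iterate_succ_apply']

lemma iter_mono (hP : IsKernel P) (hμ : IsPolicy μ) (t : ℕ) {f g : X → A → ℝ}
    (h : ∀ x a, f x a ≤ g x a) : ∀ x a, ((Ppol P μ)^[t] f) x a ≤ ((Ppol P μ)^[t] g) x a := by
  induction t with
  | zero => simpa using h
  | succ n ih =>
      intro x a
      rw [Function.iterate_succ_apply', Function.iterate_succ_apply']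
      exact Ppol_mono hP hμ ih x a

lemma resolvent_add (hP : IsKernel P) (hμ : IsPolicy μ) (hc0 : 0 ≤ c) (hc1 : c < 1)
    (f g : X → A → ℝ) :
    resolvent P c μ (f + g) = resolvent P c μ f + resolvent P c μ g := by
  funext x a
  show (∑' t : ℕ, c ^ t * ((Ppol P μ)^[t] (f + g)) x a) = _
  rw [show (fun t : ℕ => c ^ t * ((Ppol P μ)^[t] (f + g)) x a)
      = fun t : ℕ => c ^ t * ((Ppol P μ)^[t] f) x a + c ^ t * ((Ppol P μ)^[t] g) x a by
    funext t; rw [iter_add]; show c ^ t * (_ + _) = _; ring]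
  exact Summable.tsum_add (summable_res hP hμ hc0 hc1 f x a) (summable_res hP hμ hc0 hc1 g x a)

lemma resolvent_sub (hP : IsKernel P) (hμ : IsPolicy μ) (hc0 : 0 ≤ c) (hc1 : c < 1)
    (f g : X → A → ℝ) :
    resolvent P c μ (f - g) = resolvent P c μ f - resolvent P c μ g := by
  have h := resolvent_add hP hμ hc0 hc1 (f - g) g
  rw [sub_add_cancel] at h
  exact eq_sub_iff_add_eq.mpr h.symm

lemma resolvent_smul (s : ℝ) (f : X → A → ℝ) :
    resolvent P c μ (fun x a => s * f x a) = fun x a => s * resolvent P c μ f x a := by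
  funext x a
  show (∑' t : ℕ, c ^ t * ((Ppol P μ)^[t] fun x a => s * f x a) x a) = _
  rw [show (fun t : ℕ => c ^ t * ((Ppol P μ)^[t] fun x a => s * f x a) x a)
      = fun t : ℕ => s * (c ^ t * ((Ppol P μ)^[t] f) x a) by
    funext t; rw [iter_smul]; ring]
  exact tsum_mul_left

lemma resolvent_mono (hP : IsKernel P) (hμ : IsPolicy μ) (hc0 : 0 ≤ c) (hc1 : c < 1)
    {f g : X → A → ℝ} (h : ∀ x a, f x a ≤ g x a) :
    ∀ x a, resolvent P c μ f x a ≤ resolvent P c μ g x a := by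
  intro x a
  refine Summable.tsum_le_tsum (fun t => ?_) (summable_res hP hμ hc0 hc1 f x a)
    (summable_res hP hμ hc0 hc1 g x a)
  exact mul_le_mul_of_nonneg_left (iter_mono hP hμ t h x a) (pow_nonneg hc0 t)

lemma resolvent_fixed (hP : IsKernel P) (hμ : IsPolicy μ) (hc0 : 0 ≤ c) (hc1 : c < 1)
    (f Q : X → A → ℝ) (hQ : ∀ x a, Q x a = f x a + c * Ppol P μ Q x a) :
    resolvent P c μ f = Q := by
  have step : ∀ n : ℕ, (Ppol P μ)^[n] Q
      = (Ppol P μ)^[n] f + fun x a => c * ((Ppol P μ)^[n + 1] Q) x a := by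
    intro n
    induction n with
    | zero =>
        funext x a
        simpa using hQ x a
    | succ n ih =>
        rw [Function.iterate_succ_apply' (n := n) (x := Q), ih, Ppol_add, Ppol_smul,
          ← Function.iterate_succ_apply' (Ppol P μ) n f,
          ← Function.iterate_succ_apply' (Ppol P μ) (n + 1) Q]
  funext x a
  have partial_eq : ∀ n : ℕ, ∑ t ∈ Finset.range n, c ^ t * ((Ppol P μ)^[t] f) x a
      = Q x a - c ^ n * ((Ppol P μ)^[n] Q) x a := by
    intro n
    induction n with
    | zero => simp
    | succ n ih =>
        rw [Finset.sum_range_succ, ih]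
        have h := congrFun (congrFun (step n) x) a
        simp only [Pi.add_apply] at h
        rw [show ((Ppol P μ)^[n] f) x a = ((Ppol P μ)^[n] Q) x a
            - c * ((Ppol P μ)^[n + 1] Q) x a by rw [h]; ring]
        rw [pow_succ]
        ring
  have hto0 : Filter.Tendsto (fun n : ℕ => c ^ n * ((Ppol P μ)^[n] Q) x a)
      Filter.atTop (nhds 0) := by
    refine squeeze_zero_norm (fun n => ?_)
      (by simpa using (tendsto_pow_atTop_nhds_zero_of_lt_one hc0 hc1).mul_const (bnd Q))
    rw [Real.norm_eq_abs, abs_mul, abs_pow, abs_of_nonneg hc0]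
    exact mul_le_mul_of_nonneg_left (iter_abs_le hP hμ (abs_le_bnd Q) n x a) (pow_nonneg hc0 n)
  have htend : Filter.Tendsto
      (fun n : ℕ => ∑ t ∈ Finset.range n, c ^ t * ((Ppol P μ)^[t] f) x a)
      Filter.atTop (nhds (Q x a)) := by
    have := Filter.Tendsto.sub (tendsto_const_nhds (x := Q x a) (f := Filter.atTop (α := ℕ))) hto0
    rw [sub_zero] at this
    exact this.congr fun n => (partial_eq n).symm
  exact ((hasSum_iff_tendsto_nat_of_summable_norm
    (summable_norm_res hP hμ hc0 hc1 f x a)).mpr htend).tsum_eq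

lemma polQ_le_sup {π : X → A → ℝ} (hπ : IsPolicy π) (Q : X → A → ℝ) (x : X) :
    polQ π Q x ≤ ⨆ a, Q x a := by
  calc polQ π Q x ≤ ∑ a : A, π x a * (⨆ b, Q x b) := by
        refine Finset.sum_le_sum fun a _ => mul_le_mul_of_nonneg_left ?_ (hπ.1 x a)
        exact le_ciSup (Set.Finite.bddAbove (Set.finite_range _)) a
    _ = ⨆ b, Q x b := by rw [← Finset.sum_mul, hπ.2 x, one_mul]

lemma Ppol_mix (μ' π : X → A → ℝ) (lam : ℝ) (Q : X → A → ℝ) (x : X) (a : A) :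
    Ppol P (mixP lam μ' π) Q x a = lam * Ppol P μ' Q x a + (1 - lam) * Ppol P π Q x a := by
  show ∑ y, P x a y * (∑ b, (lam * μ' y b + (1 - lam) * π y b) * Q y b)
    = lam * (∑ y, P x a y * ∑ b, μ' y b * Q y b) + (1 - lam) * ∑ y, P x a y * ∑ b, π y b * Q y b
  rw [Finset.mul_sum, Finset.mul_sum, ← Finset.sum_add_distrib]
  refine Finset.sum_congr rfl fun y _ => ?_
  have hb : ∑ b, (lam * μ' y b + (1 - lam) * π y b) * Q y b
      = lam * (∑ b, μ' y b * Q y b) + (1 - lam) * ∑ b, π y b * Q y b := by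
    rw [Finset.mul_sum, Finset.mul_sum, ← Finset.sum_add_distrib]
    exact Finset.sum_congr rfl fun b _ => by ring
  rw [hb]
  ring

end Helpers
end RLPQL
namespace RLPQL
set_option linter.unusedSectionVars false
section AdagLemmas
variable {X A : Type*} [Fintype X] [Fintype A] [Nonempty X] [Nonempty A]
variable {P : X → A → X → ℝ} {γ lam : ℝ} {μ πd : X → A → ℝ}

lemma Ppol_zero (π : X → A → ℝ) : Ppol P π (0 : X → A → ℝ) = 0 := by
  funext x a; simp [Ppol, PV, polQ]

lemma resolvent_zero {c : ℝ} : resolvent P c μ (0 : X → A → ℝ) = 0 := by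
  have hiter : ∀ t, (Ppol P μ)^[t] (0 : X → A → ℝ) = 0 := by
    intro t
    induction t with
    | zero => rfl
    | succ n ih => rw [Function.iterate_succ_apply', ih, Ppol_zero]
  funext x a
  simp [resolvent, hiter]

lemma Adag_add (hP : IsKernel P) (hμ : IsPolicy μ) (hc0 : 0 ≤ γ * lam) (hc1 : γ * lam < 1)
    (f g : X → A → ℝ) :
    Adag P γ lam μ πd (f + g) = Adag P γ lam μ πd f + Adag P γ lam μ πd g := by
  funext x a
  show γ * (1 - lam) * resolvent P (γ * lam) μ (Ppol P πd (f + g)) x a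
    = γ * (1 - lam) * resolvent P (γ * lam) μ (Ppol P πd f) x a
      + γ * (1 - lam) * resolvent P (γ * lam) μ (Ppol P πd g) x a
  rw [Ppol_add, resolvent_add hP hμ hc0 hc1]
  simp only [Pi.add_apply]
  ring

lemma Adag_zero : Adag P γ lam μ πd (0 : X → A → ℝ) = 0 := by
  funext x a
  show γ * (1 - lam) * resolvent P (γ * lam) μ (Ppol P πd 0) x a = 0
  rw [Ppol_zero, resolvent_zero]
  simp

lemma Adag_sub (hP : IsKernel P) (hμ : IsPolicy μ) (hc0 : 0 ≤ γ * lam) (hc1 : γ * lam < 1)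
    (f g : X → A → ℝ) :
    Adag P γ lam μ πd (f - g) = Adag P γ lam μ πd f - Adag P γ lam μ πd g := by
  have h := Adag_add (πd := πd) hP hμ hc0 hc1 (f - g) g
  rw [sub_add_cancel] at h
  exact eq_sub_iff_add_eq.mpr h.symm

lemma Adag_mono (hP : IsKernel P) (hμ : IsPolicy μ) (hπd : IsPolicy πd)
    (hκ0 : 0 ≤ γ * (1 - lam)) (hc0 : 0 ≤ γ * lam) (hc1 : γ * lam < 1)
    {f g : X → A → ℝ} (h : f ≤ g) : Adag P γ lam μ πd f ≤ Adag P γ lam μ πd g := by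
  have hpt : ∀ x a, f x a ≤ g x a := fun x a => h x a
  rw [Pi.le_def]
  intro x
  rw [Pi.le_def]
  intro a
  exact mul_le_mul_of_nonneg_left
    (resolvent_mono hP hμ hc0 hc1 (Ppol_mono hP hπd hpt) x a) hκ0

lemma Adag_sum (hP : IsKernel P) (hμ : IsPolicy μ) (hc0 : 0 ≤ γ * lam) (hc1 : γ * lam < 1)
    {ι : Type*} (s : Finset ι) (F : ι → X → A → ℝ) :
    Adag P γ lam μ πd (∑ k ∈ s, F k) = ∑ k ∈ s, Adag P γ lam μ πd (F k) := by
  induction s using Finset.cons_induction with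
  | empty => simpa using Adag_zero (P := P) (γ := γ) (lam := lam) (μ := μ) (πd := πd)
  | cons k s hk ih => rw [Finset.sum_cons, Finset.sum_cons, Adag_add hP hμ hc0 hc1, ih]

end AdagLemmas
end RLPQL

/-- With `d_k := Q^{ρ†} - Q_k`, the iterates of Peng's Q(λ) with a fixed
behavior policy satisfy `d_K + ∑_{k<K} (A†)^{K-k-1} ε_k ≤ (A†)^K d_0` pointwise. -/
theorem peng_dk_upper_bound_fixed_mu {X A : Type*} [Fintype X] [Fintype A]
    [Nonempty X] [Nonempty A]
    (P : X → A → X → ℝ) (r : X → A → ℝ) (γ lam : ℝ)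
    (hP : IsKernel P) (hγ0 : 0 ≤ γ) (hγ1 : γ < 1) (hlam0 : 0 ≤ lam) (hlam1 : lam ≤ 1)
    (μ πd : X → A → ℝ) (hμ : IsPolicy μ) (hπd : IsPolicy πd)
    (Qof : (X → A → ℝ) → (X → A → ℝ))
    (hQof : ∀ π : X → A → ℝ, IsPolicy π → bellman P r γ π (Qof π) = Qof π)
    (hdag : ∀ π : X → A → ℝ, IsPolicy π → Qof (mixP lam μ π) ≤ Qof (mixP lam μ πd))
    (Qseq πseq : ℕ → X → A → ℝ) (ε : ℕ → X → A → ℝ)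
    (hπpol : ∀ k, IsPolicy (πseq k)) (hπgreedy : ∀ k, IsGreedy (πseq k) (Qseq k))
    (hrec : ∀ k, Qseq (k + 1) = peng P r γ lam μ (πseq k) (Qseq k) + ε k) :
    ∀ K : ℕ,
      (Qof (mixP lam μ πd) - Qseq K)
          + ∑ k ∈ Finset.range K, (Adag P γ lam μ πd)^[K - k - 1] (ε k)
        ≤ (Adag P γ lam μ πd)^[K] (Qof (mixP lam μ πd) - Qseq 0) := by
  have hc0 : 0 ≤ γ * lam := mul_nonneg hγ0 hlam0
  have hc1 : γ * lam < 1 := lt_of_le_of_lt (mul_le_of_le_one_right hγ0 hlam1) hγ1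
  have hκ0 : 0 ≤ γ * (1 - lam) := mul_nonneg hγ0 (by linarith)
  have hρ : IsPolicy (mixP lam μ πd) := by
    constructor
    · intro x a
      exact add_nonneg (mul_nonneg hlam0 (hμ.1 x a)) (mul_nonneg (by linarith) (hπd.1 x a))
    · intro x
      show ∑ a, (lam * μ x a + (1 - lam) * πd x a) = 1
      rw [Finset.sum_add_distrib, ← Finset.mul_sum, ← Finset.mul_sum, hμ.2 x, hπd.2 x]
      ring
  have hfixpt : ∀ x a, Qof (mixP lam μ πd) x a
      = (r x a + γ * (1 - lam) * Ppol P πd (Qof (mixP lam μ πd)) x a)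
        + (γ * lam) * Ppol P μ (Qof (mixP lam μ πd)) x a := by
    intro x a
    have h1 := congrFun (congrFun (hQof (mixP lam μ πd) hρ) x) a
    simp only [bellman] at h1
    rw [Ppol_mix] at h1
    linarith
  have hQd_res : resolvent P (γ * lam) μ
      (fun x a => r x a + γ * (1 - lam) * Ppol P πd (Qof (mixP lam μ πd)) x a)
      = Qof (mixP lam μ πd) :=
    resolvent_fixed hP hμ hc0 hc1 _ _ hfixpt
  have hstep : ∀ k x a, Qof (mixP lam μ πd) x a - Qseq (k + 1) x a
      ≤ Adag P γ lam μ πd (Qof (mixP lam μ πd) - Qseq k) x a - ε k x a := by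
    intro k x a
    have hgr : ∀ y b, (fun x a => r x a + γ * (1 - lam) * Ppol P πd (Qof (mixP lam μ πd)) x a) y b
        ≤ ((fun x a => r x a + γ * (1 - lam) * Ppol P (πseq k) (Qseq k) x a)
            + fun x a => γ * (1 - lam) * Ppol P πd (Qof (mixP lam μ πd) - Qseq k) x a) y b := by
      intro y b
      simp only [Pi.add_apply]
      have hsub := congrFun (congrFun
        (Ppol_sub (P := P) πd (Qof (mixP lam μ πd)) (Qseq k)) y) b
      simp only [Pi.sub_apply] at hsub
      have hle : Ppol P πd (Qseq k) y b ≤ Ppol P (πseq k) (Qseq k) y b := by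
        unfold Ppol PV
        refine Finset.sum_le_sum fun z _ => mul_le_mul_of_nonneg_left ?_ (hP.1 y b z)
        rw [hπgreedy k z]
        exact polQ_le_sup hπd (Qseq k) z
      rw [hsub]
      nlinarith [mul_le_mul_of_nonneg_left hle hκ0]
    have hres := resolvent_mono hP hμ hc0 hc1 hgr x a
    rw [hQd_res, resolvent_add hP hμ hc0 hc1] at hres
    simp only [Pi.add_apply] at hres
    have hpeng : resolvent P (γ * lam) μ
        (fun x a => r x a + γ * (1 - lam) * Ppol P (πseq k) (Qseq k) x a)
        = peng P r γ lam μ (πseq k) (Qseq k) := rfl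
    have hAd : resolvent P (γ * lam) μ
        (fun x a => γ * (1 - lam) * Ppol P πd (Qof (mixP lam μ πd) - Qseq k) x a) x a
        = Adag P γ lam μ πd (Qof (mixP lam μ πd) - Qseq k) x a := by
      rw [resolvent_smul]
      rfl
    rw [hpeng, hAd] at hres
    have hrk := congrFun (congrFun (hrec k) x) a
    simp only [Pi.add_apply] at hrk
    linarith
  intro K
  induction K with
  | zero => simp
  | succ K ih =>
      have hsum : ∑ k ∈ Finset.range (K + 1), (Adag P γ lam μ πd)^[K + 1 - k - 1] (ε k)
          = (∑ k ∈ Finset.range K, (Adag P γ lam μ πd)^[K - k] (ε k)) + ε K := by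
        rw [Finset.sum_range_succ]
        congr 1
        · refine Finset.sum_congr rfl fun k hk => ?_
          have hkK := Finset.mem_range.mp hk
          congr 1
          omega
        · have h0 : K + 1 - K - 1 = 0 := by omega
          rw [h0, Function.iterate_zero_apply]
      have h1 : Qof (mixP lam μ πd) - Qseq K
          ≤ (Adag P γ lam μ πd)^[K] (Qof (mixP lam μ πd) - Qseq 0)
            - ∑ k ∈ Finset.range K, (Adag P γ lam μ πd)^[K - k - 1] (ε k) :=
        le_sub_iff_add_le.mpr ih
      have hA1 : Adag P γ lam μ πd (Qof (mixP lam μ πd) - Qseq K)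
          ≤ (Adag P γ lam μ πd)^[K + 1] (Qof (mixP lam μ πd) - Qseq 0)
            - ∑ k ∈ Finset.range K, (Adag P γ lam μ πd)^[K - k] (ε k) := by
        calc Adag P γ lam μ πd (Qof (mixP lam μ πd) - Qseq K)
            ≤ Adag P γ lam μ πd
                ((Adag P γ lam μ πd)^[K] (Qof (mixP lam μ πd) - Qseq 0)
                  - ∑ k ∈ Finset.range K, (Adag P γ lam μ πd)^[K - k - 1] (ε k)) :=
              Adag_mono hP hμ hπd hκ0 hc0 hc1 h1
          _ = Adag P γ lam μ πd ((Adag P γ lam μ πd)^[K] (Qof (mixP lam μ πd) - Qseq 0))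
              - Adag P γ lam μ πd (∑ k ∈ Finset.range K, (Adag P γ lam μ πd)^[K - k - 1] (ε k)) :=
              Adag_sub hP hμ hc0 hc1 _ _
          _ = (Adag P γ lam μ πd)^[K + 1] (Qof (mixP lam μ πd) - Qseq 0)
              - ∑ k ∈ Finset.range K, (Adag P γ lam μ πd)^[K - k] (ε k) := by
              rw [← Function.iterate_succ_apply' (Adag P γ lam μ πd) K,
                Adag_sum hP hμ hc0 hc1]
              congr 1
              refine Finset.sum_congr rfl fun k hk => ?_
              have hkK := Finset.mem_range.mp hk
              rw [← Function.iterate_succ_apply' (Adag P γ lam μ πd) (K - k - 1)]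
              congr 1
              omega
      have h3 : Qof (mixP lam μ πd) - Qseq (K + 1)
          ≤ Adag P γ lam μ πd (Qof (mixP lam μ πd) - Qseq K) - ε K := by
        rw [Pi.le_def]
        intro x
        rw [Pi.le_def]
        intro a
        simpa using hstep K x a
      rw [hsum]
      calc Qof (mixP lam μ πd) - Qseq (K + 1)
            + ((∑ k ∈ Finset.range K, (Adag P γ lam μ πd)^[K - k] (ε k)) + ε K)
          ≤ (Adag P γ lam μ πd (Qof (mixP lam μ πd) - Qseq K) - ε K)
            + ((∑ k ∈ Finset.range K, (Adag P γ lam μ πd)^[K - k] (ε k)) + ε K) :=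
            add_le_add_left h3 _
        _ = Adag P γ lam μ πd (Qof (mixP lam μ πd) - Qseq K)
            + ∑ k ∈ Finset.range K, (Adag P γ lam μ πd)^[K - k] (ε k) := by abel
        _ ≤ ((Adag P γ lam μ πd)^[K + 1] (Qof (mixP lam μ πd) - Qseq 0)
              - ∑ k ∈ Finset.range K, (Adag P γ lam μ πd)^[K - k] (ε k))
            + ∑ k ∈ Finset.range K, (Adag P γ lam μ πd)^[K - k] (ε k) :=
            add_le_add_left hA1 _
        _ = (Adag P γ lam μ πd)^[K + 1] (Qof (mixP lam μ πd) - Qseq 0) := by abel
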